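/- Cone–sawtooth equivalence: There exist constants c, C > 0, depending only on n, the ADR constant C_E and the grid and Whitney constants, such that for every Q ∈ 𝔻 and every measurable F : Ω → [0,∞]: c ∬_{𝒯_Q} F(Y) dY / δ(Y) ≤ ∫_Q ∬_{Γ_Q(x)} F(Y) dY / δ(Y)^{n+1} dσ(x) ≤ C ∬_{𝒯_Q} F(Y) dY / δ(Y), where 𝒯_Q := ⋃ {U_{Q′} : Q′ ∈ 𝔻, Q′ ⊆ Q}. In particular, for any function b with Θb defined on Ω, the condition ∫_Q ∬_{Γ_Q(x)} |Θb(Y)|² dY / δ(Y)^{n+1} dσ(x) ≤ C₀ σ(Q) is equivalent, up to a change of the constant, to ∬_{𝒯_Q} |Θb(Y)|² dY / δ(Y) ≤ C₀′ σ(Q). -/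

import Mathlib

open MeasureTheory Metric Set ENNReal NNReal

noncomputable section

namespace LocalTb

/-- The ambient Euclidean space `ℝ^{n+1}`. -/
abbrev Amb (n : ℕ) := EuclideanSpace ℝ (Fin (n + 1))

variable {n : ℕ} {E : Set (Amb n)}

/-- `σ`, the restriction of `n`-dimensional Hausdorff measure to `E`. -/
def sigmaE (n : ℕ) (E : Set (Amb n)) : Measure (Amb n) := μH[(n : ℝ)].restrict E

/-- `δ(X) = dist(X, E)`. -/
def del (E : Set (Amb n)) (X : Amb n) : ℝ := Metric.infDist X E

/-- `E` is a closed `n`-dimensional Ahlfors-David regular set with constant `CE`. -/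
def IsADR (n : ℕ) (E : Set (Amb n)) (CE : ℝ) : Prop :=
  IsClosed E ∧ 1 ≤ CE ∧
  ∀ x ∈ E, ∀ r : ℝ, 0 < r → ENNReal.ofReal r < EMetric.diam E →
    ENNReal.ofReal (CE⁻¹ * r ^ n) ≤ sigmaE n E (ball x r) ∧
      sigmaE n E (ball x r) ≤ ENNReal.ofReal (CE * r ^ n)

/-- The operator `Θ f (X) = ∫_E ψ(X,y) f(y) dσ(y)`. -/
def Theta (n : ℕ) (E : Set (Amb n)) (ψ : Amb n → Amb n → ℂ) (f : Amb n → ℂ)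
    (X : Amb n) : ℂ :=
  ∫ y, ψ X y * f y ∂(sigmaE n E)

/-- The standard size and Hölder conditions on the kernel `ψ`, with exponent `α` and
constant `Cψ`, on `Ω × E` where `Ω = ℝ^{n+1} \ E`. -/
def KernelCond (n : ℕ) (E : Set (Amb n)) (ψ : Amb n → Amb n → ℂ) (α Cψ : ℝ) : Prop :=
  0 < α ∧ 0 < Cψ ∧ Measurable (Function.uncurry ψ) ∧
  (∀ X, X ∉ E → ∀ y ∈ E,
    ‖ψ X y‖ ≤ Cψ * del E X ^ α / dist X y ^ ((n : ℝ) + α)) ∧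
  (∀ X, X ∉ E → ∀ y ∈ E, ∀ y' ∈ E, 2 * dist y y' ≤ dist X y →
    ‖ψ X y - ψ X y'‖ ≤ Cψ * dist y y' ^ α / dist X y ^ ((n : ℝ) + α))

/-- A dyadic grid (Christ-David cubes) on `E`. -/
structure DyadicGrid (n : ℕ) (E : Set (Amb n)) where
  Dk : ℤ → Set (Set (Amb n))
  α₀ : ℝ
  η₀ : ℝ
  C₁ : ℝ
  C₂ : ℝ
  α₀_pos : 0 < α₀
  η₀_mem : η₀ ∈ Set.Ioc (0 : ℝ) 1
  C₁_pos : 0 < C₁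
  C₂_pos : 0 < C₂
  scale_admissible : ∀ k : ℤ, (Dk k).Nonempty →
    ENNReal.ofReal ((2 : ℝ) ^ (-k)) < EMetric.diam E
  measurableSet : ∀ k, ∀ Q ∈ Dk k, MeasurableSet Q
  subset_E : ∀ k, ∀ Q ∈ Dk k, Q ⊆ E
  cover : ∀ k : ℤ, ENNReal.ofReal ((2 : ℝ) ^ (-k)) < EMetric.diam E → ⋃₀ Dk k = E
  pairwise_disj : ∀ k, ∀ Q ∈ Dk k, ∀ Q' ∈ Dk k, Q ≠ Q' → Q ∩ Q' = ∅
  nested : ∀ ⦃k k' : ℤ⦄, k < k' → ∀ Q ∈ Dk k, ∀ Q' ∈ Dk k', Q' ⊆ Q ∨ Q' ∩ Q = ∅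
  parent_unique : ∀ ⦃k k' : ℤ⦄, k < k' →
    ENNReal.ofReal ((2 : ℝ) ^ (-k)) < EMetric.diam E →
    ∀ Q' ∈ Dk k', ∃! Q, Q ∈ Dk k ∧ Q' ⊆ Q
  diam_bound : ∀ k, ∀ Q ∈ Dk k,
    ENNReal.ofReal (C₁⁻¹ * (2 : ℝ) ^ (-k)) ≤ EMetric.diam Q ∧
      EMetric.diam Q ≤ ENNReal.ofReal (C₁ * (2 : ℝ) ^ (-k))
  meas_bound : ∀ k, ∀ Q ∈ Dk k,
    ENNReal.ofReal (C₁⁻¹ * (2 : ℝ) ^ (-(k * (n : ℤ)))) ≤ sigmaE n E Q ∧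
      sigmaE n E Q ≤ ENNReal.ofReal (C₁ * (2 : ℝ) ^ (-(k * (n : ℤ))))
  surface_ball : ∀ k, ∀ Q ∈ Dk k, ∃ x ∈ Q, ball x (α₀ * (2 : ℝ) ^ (-k)) ∩ E ⊆ Q
  thin_boundary : ∀ k, ∀ Q ∈ Dk k, ∀ τ ∈ Set.Ioo (0 : ℝ) α₀,
    sigmaE n E {x ∈ Q | Metric.infDist x (E \ Q) ≤ τ * (2 : ℝ) ^ (-k)} ≤
      ENNReal.ofReal (C₂ * τ ^ η₀) * sigmaE n E Q

/-- The distance between two sets. -/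
def setDist (A B : Set (Amb n)) : ℝ := (⨅ x ∈ A, EMetric.infEdist x B).toReal

/-- The closed axis-parallel cube centered at `c` with side length `2^{-m}`. -/
def closedCube (c : Amb n) (m : ℤ) : Set (Amb n) :=
  {Y | ∀ i, |Y i - c i| ≤ (2 : ℝ) ^ (-m) / 2}

/-- The concentric dilate `tI` of the cube `closedCube c m`. -/
def dilCube (c : Amb n) (m : ℤ) (t : ℝ) : Set (Amb n) :=
  {Y | ∀ i, |Y i - c i| ≤ t * ((2 : ℝ) ^ (-m) / 2)}

/-- A Whitney decomposition of `Ω = ℝ^{n+1} \ E`: a family of closed cubes with dyadic side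
lengths (a cube is recorded as its center together with the scale `m`, the side being
`2^{-m}`), with pairwise disjoint interiors, covering `Ω`, and at the right distance
from `E`. -/
structure Whitney (n : ℕ) (E : Set (Amb n)) where
  cubes : Set (Amb n × ℤ)
  disj_int : ∀ p ∈ cubes, ∀ q ∈ cubes, p ≠ q →
    interior (closedCube p.1 p.2) ∩ interior (closedCube q.1 q.2) = ∅
  covers : (⋃ p ∈ cubes, closedCube p.1 p.2) = Eᶜ
  dist_lower : ∀ p ∈ cubes,
    4 * Metric.diam (closedCube p.1 p.2) ≤ setDist (dilCube p.1 p.2 4) E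
  dist_mid : ∀ p ∈ cubes, setDist (dilCube p.1 p.2 4) E ≤ setDist (closedCube p.1 p.2) E
  dist_upper : ∀ p ∈ cubes,
    setDist (closedCube p.1 p.2) E ≤ 40 * Metric.diam (closedCube p.1 p.2)

/-- The Whitney cubes `I` entering the Whitney region of a dyadic cube `Q` of
generation `k` (so that `ℓ(Q) = 2^{-k}`), with aperture `β`:
`ℓ(I)/8 ≤ ℓ(Q) ≤ 8 ℓ(I)` and `dist(Q,I) ≤ β ℓ(Q)`. -/
def whitneyIdx (W : Whitney n E) (β : ℝ) (k : ℤ) (Q : Set (Amb n)) : Set (Amb n × ℤ) :=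
  {p ∈ W.cubes | (2 : ℝ) ^ (-p.2) / 8 ≤ (2 : ℝ) ^ (-k) ∧
    (2 : ℝ) ^ (-k) ≤ 8 * (2 : ℝ) ^ (-p.2) ∧
    setDist Q (closedCube p.1 p.2) ≤ β * (2 : ℝ) ^ (-k)}

/-- The Whitney region `U_Q` of a dyadic cube `Q` of generation `k`. -/
def UQ (W : Whitney n E) (β : ℝ) (k : ℤ) (Q : Set (Amb n)) : Set (Amb n) :=
  ⋃ p ∈ whitneyIdx W β k Q, closedCube p.1 p.2

/-- The truncated cone `Γ_Q(x)`. -/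
def cone (G : DyadicGrid n E) (W : Whitney n E) (β : ℝ) (Q : Set (Amb n))
    (x : Amb n) : Set (Amb n) :=
  ⋃ (k' : ℤ), ⋃ Q' ∈ {Q' ∈ G.Dk k' | x ∈ Q' ∧ Q' ⊆ Q}, UQ W β k' Q'

/-- The good sawtooth cone `γ_Q(x)` relative to a family `F` of (dyadic cube, scale)
pairs: the union of Whitney regions of good subcubes `Q' ⊆ Q` containing `x`, i.e.
those such that whenever `Q'` meets some `Q_k ∈ F` then `ℓ(Q') > ℓ(Q_k)`. -/
def goodCone (G : DyadicGrid n E) (W : Whitney n E) (β : ℝ)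
    (F : Set (Set (Amb n) × ℤ)) (Q : Set (Amb n)) (x : Amb n) : Set (Amb n) :=
  ⋃ (k' : ℤ), ⋃ Q' ∈ {Q' ∈ G.Dk k' | x ∈ Q' ∧ Q' ⊆ Q ∧
      ∀ q ∈ F, (Q' ∩ q.1).Nonempty → (2 : ℝ) ^ (-q.2) < (2 : ℝ) ^ (-k')}, UQ W β k' Q'

/-- The conical square function `∬_{Γ_Q(x)} |Θ f(Y)|² dY/δ(Y)^{n+1}`. -/
def coneSq (G : DyadicGrid n E) (W : Whitney n E) (β : ℝ)
    (ψ : Amb n → Amb n → ℂ) (f : Amb n → ℂ) (Q : Set (Amb n)) (x : Amb n) : ℝ≥0∞ :=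
  ∫⁻ Y in cone G W β Q x,
    (‖Theta n E ψ f Y‖₊ : ℝ≥0∞) ^ 2 / ENNReal.ofReal (del E Y ^ (n + 1)) ∂volume

/-- The sawtooth conical square function `∬_{γ_Q(x)} |Θ f(Y)|² dY/δ(Y)^{n+1}`. -/
def goodConeSq (G : DyadicGrid n E) (W : Whitney n E) (β : ℝ)
    (ψ : Amb n → Amb n → ℂ) (F : Set (Set (Amb n) × ℤ)) (f : Amb n → ℂ)
    (Q : Set (Amb n)) (x : Amb n) : ℝ≥0∞ :=
  ∫⁻ Y in goodCone G W β F Q x,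
    (‖Theta n E ψ f Y‖₊ : ℝ≥0∞) ^ 2 / ENNReal.ofReal (del E Y ^ (n + 1)) ∂volume

/-- The dyadic Hardy-Littlewood maximal operator (acting on `ℝ≥0∞`-valued functions). -/
def dyadicMax (G : DyadicGrid n E) (g : Amb n → ℝ≥0∞) (x : Amb n) : ℝ≥0∞ :=
  ⨆ (k : ℤ) (Q : Set (Amb n)) (_ : Q ∈ G.Dk k) (_ : x ∈ Q),
    (sigmaE n E Q)⁻¹ * ∫⁻ y in Q, g y ∂(sigmaE n E)


/-- The sawtooth region `𝒯_Q`, the union of the Whitney regions of all dyadic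
subcubes of `Q`. -/
def TQ (G : DyadicGrid n E) (W : Whitney n E) (β : ℝ) (Q : Set (Amb n)) : Set (Amb n) :=
  ⋃ (k' : ℤ), ⋃ Q' ∈ {Q' ∈ G.Dk k' | Q' ⊆ Q}, UQ W β k' Q'

lemma closedCube_isClosed (c : Amb n) (m : ℤ) : IsClosed (closedCube c m) := by
  have : closedCube c m = ⋂ i, {Y : Amb n | |Y i - c i| ≤ (2:ℝ)^(-m)/2} := by
    ext Y; simp [closedCube, Set.mem_iInter]
  rw [this]
  refine isClosed_iInter fun i => ?_
  have hc : Continuous fun Y : Amb n => |Y i - c i| := by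
    have h1 : Continuous fun Y : Amb n => Y i := by
      exact (EuclideanSpace.proj i : Amb n →L[ℝ] ℝ).continuous
    exact (h1.sub continuous_const).abs
  exact isClosed_le hc continuous_const

lemma center_mem_closedCube (c : Amb n) (m : ℤ) : c ∈ closedCube c m := by
  intro i; simp; positivity

lemma closedCube_subset_dilCube (c : Amb n) (m : ℤ) : closedCube c m ⊆ dilCube c m 4 := by
  intro Y hY i
  have := hY i
  nlinarith [this, (by positivity : (0:ℝ) < (2:ℝ)^(-m))]

lemma dist_le_of_mem_closedCube {c : Amb n} {m : ℤ} {X Y : Amb n}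
    (hX : X ∈ closedCube c m) (hY : Y ∈ closedCube c m) :
    dist X Y ≤ (n+1 : ℝ) * (2:ℝ)^(-m) := by
  set s : ℝ := (2:ℝ)^(-m) with hs
  have hs0 : 0 < s := by positivity
  have hd : dist X Y = Real.sqrt (∑ i, dist (X i) (Y i) ^ 2) := EuclideanSpace.dist_eq X Y
  have hbound : (∑ i, dist (X i) (Y i) ^ 2) ≤ (n+1 : ℝ) * s^2 := by
    have : ∀ i : Fin (n+1), dist (X i) (Y i) ^ 2 ≤ s^2 := by
      intro i
      have h1 := hX i; have h2 := hY i
      have : |X i - Y i| ≤ s := by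
        have := abs_sub (X i - c i) (Y i - c i)
        have h3 : |X i - Y i| ≤ |X i - c i| + |Y i - c i| := by
          have : X i - Y i = (X i - c i) - (Y i - c i) := by ring
          rw [this]; exact abs_sub _ _
        linarith
      have h4 : dist (X i) (Y i) = |X i - Y i| := Real.dist_eq _ _
      rw [h4]
      exact sq_le_sq' (by linarith [abs_nonneg (X i - Y i)]) this
    calc (∑ i, dist (X i) (Y i) ^ 2) ≤ ∑ _i : Fin (n+1), s^2 := Finset.sum_le_sum (fun i _ => this i)
      _ = (n+1:ℝ) * s^2 := by simp [Finset.sum_const]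
  calc dist X Y ≤ Real.sqrt ((n+1:ℝ) * s^2) := by rw [hd]; exact Real.sqrt_le_sqrt hbound
    _ ≤ (n+1:ℝ) * s := by
        rw [show (n+1:ℝ)*s^2 = ((n+1:ℝ))*(s*s) by ring]
        have h5 : Real.sqrt ((n+1:ℝ)*(s*s)) ≤ Real.sqrt (((n+1:ℝ)*s)*((n+1:ℝ)*s)) := by
          apply Real.sqrt_le_sqrt; nlinarith
        calc Real.sqrt ((n+1:ℝ)*(s*s)) ≤ Real.sqrt (((n+1:ℝ)*s)*((n+1:ℝ)*s)) := h5
          _ = (n+1:ℝ)*s := Real.sqrt_mul_self (by positivity)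

lemma isBounded_closedCube (c : Amb n) (m : ℤ) : Bornology.IsBounded (closedCube c m) :=
  Metric.isBounded_iff.2 ⟨(n+1:ℝ) * (2:ℝ)^(-m), fun _ hX _ hY => dist_le_of_mem_closedCube hX hY⟩

lemma diam_closedCube_le (c : Amb n) (m : ℤ) :
    Metric.diam (closedCube c m) ≤ (n+1 : ℝ) * (2:ℝ)^(-m) :=
  Metric.diam_le_of_forall_dist_le (by positivity) (fun _ hX _ hY => dist_le_of_mem_closedCube hX hY)

lemma le_diam_closedCube (c : Amb n) (m : ℤ) :
    (2:ℝ)^(-m) ≤ Metric.diam (closedCube c m) := by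
  set s : ℝ := (2:ℝ)^(-m) with hs
  have hs0 : 0 < s := by positivity
  set X : Amb n := WithLp.toLp 2 (fun i => if i = 0 then c i + s/2 else c i : Fin (n+1) → ℝ)
  set Y : Amb n := WithLp.toLp 2 (fun i => if i = 0 then c i - s/2 else c i : Fin (n+1) → ℝ)
  have hXv : ∀ i, X i = if i = 0 then c i + s/2 else c i := fun i => rfl
  have hYv : ∀ i, Y i = if i = 0 then c i - s/2 else c i := fun i => rfl
  have hX : X ∈ closedCube c m := by
    intro i; rw [hXv i]
    by_cases h : i = 0 <;> simp only [h, if_true, if_false, if_neg]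
    · rw [show c 0 + s/2 - c 0 = s/2 by ring, abs_of_pos (by linarith)]
    · simpa using (by positivity : (0:ℝ) ≤ (2:ℝ)^(-m)/2)
  have hY : Y ∈ closedCube c m := by
    intro i; rw [hYv i]
    by_cases h : i = 0 <;> simp only [h, if_true, if_false, if_neg]
    · rw [show c 0 - s/2 - c 0 = -(s/2) by ring, abs_neg, abs_of_pos (by linarith)]
    · simpa using (by positivity : (0:ℝ) ≤ (2:ℝ)^(-m)/2)
  have hdist : dist X Y = s := by
    rw [EuclideanSpace.dist_eq]
    have hterm : ∀ i : Fin (n+1), dist (X i) (Y i) ^ 2 = if i = 0 then s^2 else 0 := by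
      intro i; rw [hXv i, hYv i, Real.dist_eq]
      by_cases h : i = 0 <;> simp only [h, if_true, if_false, if_neg]
      · rw [show c 0 + s/2 - (c 0 - s/2) = s by ring, abs_of_pos hs0]
      · simp
    rw [Finset.sum_congr rfl (fun i _ => hterm i)]
    rw [Finset.sum_ite_eq' Finset.univ (0 : Fin (n+1)) (fun _ => s^2)]
    simp only [Finset.mem_univ, if_true]
    exact Real.sqrt_sq hs0.le
  calc s = dist X Y := hdist.symm
    _ ≤ _ := Metric.dist_le_diam_of_mem (isBounded_closedCube c m) hX hY

lemma setDist_le_infDist {A B : Set (Amb n)} {Y : Amb n} (hY : Y ∈ A) (hB : B.Nonempty) :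
    setDist A B ≤ Metric.infDist Y B := by
  have hfin : EMetric.infEdist Y B ≠ ⊤ := by
    rcases hB with ⟨b, hb⟩
    exact ne_top_of_le_ne_top (edist_ne_top Y b) (EMetric.infEdist_le_edist_of_mem hb)
  have hle : (⨅ x ∈ A, EMetric.infEdist x B) ≤ EMetric.infEdist Y B := biInf_le _ hY
  exact ENNReal.toReal_mono hfin hle

lemma exists_near_setDist {A B : Set (Amb n)} (hA : A.Nonempty) (hB : B.Nonempty)
    {ε : ℝ} (hε : 0 < ε) : ∃ a ∈ A, Metric.infDist a B ≤ setDist A B + ε := by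
  set t := ⨅ x ∈ A, EMetric.infEdist x B with ht
  have htfin : t ≠ ⊤ := by
    rcases hA with ⟨a, ha⟩; rcases hB with ⟨b, hb⟩
    exact ne_top_of_le_ne_top (ne_top_of_le_ne_top (edist_ne_top a b)
      (EMetric.infEdist_le_edist_of_mem hb)) (biInf_le _ ha)
  have hlt : t < t + ENNReal.ofReal ε :=
    ENNReal.lt_add_right htfin (by simp [ENNReal.ofReal_pos.2 hε, ne_of_gt])
  rw [ht] at hlt
  obtain ⟨a, ha, hlt'⟩ : ∃ a ∈ A, EMetric.infEdist a B < t + ENNReal.ofReal ε := by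
    by_contra hcon
    push_neg at hcon
    exact absurd (le_iInf₂ fun a ha => hcon a ha) (not_le.2 hlt)
  refine ⟨a, ha, ?_⟩
  have := ENNReal.toReal_mono (by simp [htfin]) hlt'.le
  rw [ENNReal.toReal_add htfin ENNReal.ofReal_ne_top, ENNReal.toReal_ofReal hε.le] at this
  exact this

lemma dist_le_diam_setDist_diam {A B : Set (Amb n)} (hAb : Bornology.IsBounded A)
    (hBb : Bornology.IsBounded B) {x y : Amb n} (hx : x ∈ A) (hy : y ∈ B) :
    dist x y ≤ Metric.diam A + setDist A B + Metric.diam B := by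
  refine le_of_forall_pos_le_add fun ε hε => ?_
  obtain ⟨a, ha, hnear⟩ := exists_near_setDist ⟨x, hx⟩ ⟨y, hy⟩ (half_pos hε)
  obtain ⟨b, hb, hab⟩ := (Metric.infDist_lt_iff ⟨y, hy⟩).1
    (lt_of_le_of_lt (le_refl (Metric.infDist a B))
      (lt_add_of_pos_right _ (half_pos hε)))
  calc dist x y ≤ dist x a + dist a b + dist b y := dist_triangle4 x a b y
    _ ≤ Metric.diam A + (Metric.infDist a B + ε/2) + Metric.diam B :=
        add_le_add (add_le_add (Metric.dist_le_diam_of_mem hAb hx ha) hab.le)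
          (Metric.dist_le_diam_of_mem hBb hb hy)
    _ ≤ Metric.diam A + (setDist A B + ε/2 + ε/2) + Metric.diam B := by
        gcongr
    _ = Metric.diam A + setDist A B + Metric.diam B + ε := by ring

lemma infDist_le_setDist_add_diam {A B : Set (Amb n)} (hAb : Bornology.IsBounded A)
    (hB : B.Nonempty) {Y : Amb n} (hY : Y ∈ A) :
    Metric.infDist Y B ≤ setDist A B + Metric.diam A := by
  refine le_of_forall_pos_le_add fun ε hε => ?_
  obtain ⟨a, ha, hnear⟩ := exists_near_setDist ⟨Y, hY⟩ hB hε
  calc Metric.infDist Y B ≤ Metric.infDist a B + dist Y a := Metric.infDist_le_infDist_add_dist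
    _ ≤ (setDist A B + ε) + Metric.diam A := by
        gcongr
        exact Metric.dist_le_diam_of_mem hAb hY ha
    _ = setDist A B + Metric.diam A + ε := by ring


section Aux

variable {n : ℕ} {E : Set (Amb n)}

lemma measurableSet_closedCube (c : Amb n) (m : ℤ) : MeasurableSet (closedCube c m) :=
  (closedCube_isClosed c m).measurableSet

/-- The Whitney family is countable. -/
lemma Whitney.countable (W : Whitney n E) : W.cubes.Countable := by
  have hne : ∀ p ∈ W.cubes, (interior (closedCube p.1 p.2)).Nonempty := by
    intro p _
    have hopen : IsOpen {Y : Amb n | ∀ i, |Y i - p.1 i| < (2:ℝ)^(-p.2)/2} := by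
      have heq : {Y : Amb n | ∀ i, |Y i - p.1 i| < (2:ℝ)^(-p.2)/2}
          = ⋂ i, {Y : Amb n | |Y i - p.1 i| < (2:ℝ)^(-p.2)/2} := by
        ext Y; simp [Set.mem_iInter]
      rw [heq]
      refine isOpen_iInter_of_finite fun i => ?_
      have h1 : Continuous fun Y : Amb n => |Y i - p.1 i| :=
        (((EuclideanSpace.proj i : Amb n →L[ℝ] ℝ).continuous).sub continuous_const).abs
      exact isOpen_lt h1 continuous_const
    have hsub : {Y : Amb n | ∀ i, |Y i - p.1 i| < (2:ℝ)^(-p.2)/2} ⊆ closedCube p.1 p.2 :=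
      fun Y hY i => (hY i).le
    have hc : p.1 ∈ {Y : Amb n | ∀ i, |Y i - p.1 i| < (2:ℝ)^(-p.2)/2} := by
      intro i; simp only [Set.mem_setOf_eq, sub_self, abs_zero]; positivity
    exact ⟨p.1, interior_maximal hsub hopen hc⟩
  have hdisj : W.cubes.PairwiseDisjoint (fun p => interior (closedCube p.1 p.2)) := by
    intro p hp q hq hpq
    have := W.disj_int p hp q hq hpq
    exact Set.disjoint_iff_inter_eq_empty.2 this
  exact hdisj.countable_of_isOpen (fun p _ => isOpen_interior) hne

lemma measurableSet_UQ (W : Whitney n E) (β : ℝ) (k : ℤ) (Q : Set (Amb n)) :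
    MeasurableSet (UQ W β k Q) := by
  have hcnt : (whitneyIdx W β k Q).Countable :=
    W.countable.mono (fun p hp => hp.1)
  exact MeasurableSet.biUnion hcnt fun p _ => measurableSet_closedCube p.1 p.2

/-- The subcubes of `Q` at generation `k'` form a countable family. -/
lemma countable_subcubes (G : DyadicGrid n E) {k : ℤ} {Q : Set (Amb n)} (hQ : Q ∈ G.Dk k)
    (k' : ℤ) : {Q' ∈ G.Dk k' | Q' ⊆ Q}.Countable := by
  set S := {Q' ∈ G.Dk k' | Q' ⊆ Q} with hS
  have hQfin : sigmaE n E Q ≠ ⊤ :=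
    ne_top_of_le_ne_top ENNReal.ofReal_ne_top (G.meas_bound k Q hQ).2
  have hmble : ∀ i : ↥S, MeasurableSet (i : Set (Amb n)) :=
    fun i => G.measurableSet k' i (i.2.1)
  have hdisj : Pairwise (Function.onFun Disjoint fun i : ↥S => (i : Set (Amb n))) := by
    intro i j hij
    have hne : (i : Set (Amb n)) ≠ (j : Set (Amb n)) := fun h => hij (Subtype.ext h)
    exact Set.disjoint_iff_inter_eq_empty.2 (G.pairwise_disj k' i i.2.1 j j.2.1 hne)
  have hfin : sigmaE n E (⋃ i : ↥S, (i : Set (Amb n))) ≠ ⊤ := by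
    refine ne_top_of_le_ne_top hQfin (measure_mono ?_)
    exact Set.iUnion_subset fun i => i.2.2
  have := MeasureTheory.Measure.countable_meas_pos_of_disjoint_of_meas_iUnion_ne_top
    (sigmaE n E) hmble hdisj hfin
  have huniv : {i : ↥S | 0 < sigmaE n E (i : Set (Amb n))} = Set.univ := by
    ext i
    simp only [Set.mem_setOf_eq, Set.mem_univ, iff_true]
    calc (0 : ℝ≥0∞) < ENNReal.ofReal (G.C₁⁻¹ * (2:ℝ) ^ (-(k' * (n:ℤ)))) := by
          rw [ENNReal.ofReal_pos]
          exact mul_pos (inv_pos.2 G.C₁_pos) (by positivity)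
      _ ≤ sigmaE n E (i : Set (Amb n)) := (G.meas_bound k' i i.2.1).1
  rw [huniv] at this
  have : Countable ↥S := Set.countable_univ_iff.1 this
  exact Set.countable_coe_iff.1 this

lemma measurableSet_TQ (G : DyadicGrid n E) (W : Whitney n E) (β : ℝ)
    {k : ℤ} {Q : Set (Amb n)} (hQ : Q ∈ G.Dk k) : MeasurableSet (TQ G W β Q) := by
  refine MeasurableSet.iUnion fun k' => ?_
  exact MeasurableSet.biUnion (countable_subcubes G hQ k')
    (fun Q' _ => measurableSet_UQ W β k' Q')

lemma measurableSet_cone (G : DyadicGrid n E) (W : Whitney n E) (β : ℝ)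
    {k : ℤ} {Q : Set (Amb n)} (hQ : Q ∈ G.Dk k) (x : Amb n) :
    MeasurableSet (cone G W β Q x) := by
  refine MeasurableSet.iUnion fun k' => ?_
  refine MeasurableSet.biUnion ?_ (fun Q' _ => measurableSet_UQ W β k' Q')
  exact (countable_subcubes G hQ k').mono (fun Q' hQ' => Set.mem_sep_iff.2 ⟨hQ'.1, hQ'.2.2⟩)

lemma measurableSet_coneGraph (G : DyadicGrid n E) (W : Whitney n E) (β : ℝ)
    {k : ℤ} {Q : Set (Amb n)} (hQ : Q ∈ G.Dk k) :
    MeasurableSet {z : Amb n × Amb n | z.2 ∈ cone G W β Q z.1} := by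
  have heq : {z : Amb n × Amb n | z.2 ∈ cone G W β Q z.1}
      = ⋃ (k' : ℤ), ⋃ Q' ∈ {Q' ∈ G.Dk k' | Q' ⊆ Q},
          (Q' ×ˢ UQ W β k' Q' : Set (Amb n × Amb n)) := by
    ext z
    simp only [Set.mem_setOf_eq, cone, Set.mem_iUnion, Set.mem_sep_iff, Set.mem_prod]
    constructor
    · rintro ⟨k', Q', ⟨hQ', hzQ', hsub⟩, hU⟩
      exact ⟨k', Q', ⟨hQ', hsub⟩, hzQ', hU⟩
    · rintro ⟨k', Q', ⟨hQ', hsub⟩, hzQ', hU⟩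
      exact ⟨k', Q', ⟨hQ', hzQ', hsub⟩, hU⟩
  rw [heq]
  refine MeasurableSet.iUnion fun k' => ?_
  refine MeasurableSet.biUnion (countable_subcubes G hQ k') (fun Q' hQ' => ?_)
  exact (G.measurableSet k' Q' hQ'.1).prod (measurableSet_UQ W β k' Q')

lemma cone_subset_TQ (G : DyadicGrid n E) (W : Whitney n E) (β : ℝ)
    (Q : Set (Amb n)) (x : Amb n) : cone G W β Q x ⊆ TQ G W β Q := by
  intro Y hY
  simp only [cone, Set.mem_iUnion, Set.mem_sep_iff] at hY
  obtain ⟨k', Q', ⟨hQ', _, hsub⟩, hU⟩ := hY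
  simp only [TQ, Set.mem_iUnion, Set.mem_sep_iff]
  exact ⟨k', Q', ⟨hQ', hsub⟩, hU⟩

/-- Bounds for `δ(Y)` when `Y` belongs to a Whitney cube of `U_{Q'}`. -/
lemma whitney_delta_bounds (hEne : E.Nonempty) {W : Whitney n E} {β : ℝ} {k' : ℤ}
    {Q' : Set (Amb n)} {p : Amb n × ℤ} (hp : p ∈ whitneyIdx W β k' Q')
    {Y : Amb n} (hY : Y ∈ closedCube p.1 p.2) :
    (2:ℝ)^(-k')/2 ≤ del E Y ∧ del E Y ≤ 328*(n+1)*(2:ℝ)^(-k') := by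
  obtain ⟨hpW, hs1, hs2, _⟩ := hp
  have hIb := isBounded_closedCube p.1 p.2
  have hdiam_le : Metric.diam (closedCube p.1 p.2) ≤ (n+1:ℝ) * (2:ℝ)^(-p.2) :=
    diam_closedCube_le p.1 p.2
  have hdiam_ge : (2:ℝ)^(-p.2) ≤ Metric.diam (closedCube p.1 p.2) :=
    le_diam_closedCube p.1 p.2
  constructor
  · -- lower bound
    have h1 : setDist (dilCube p.1 p.2 4) E ≤ del E Y :=
      setDist_le_infDist (closedCube_subset_dilCube p.1 p.2 hY) hEne
    have h2 := W.dist_lower p hpW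
    calc (2:ℝ)^(-k')/2 = 4 * ((2:ℝ)^(-k')/8) := by ring
      _ ≤ 4 * (2:ℝ)^(-p.2) := by linarith [hs2]
      _ ≤ 4 * Metric.diam (closedCube p.1 p.2) := by linarith
      _ ≤ setDist (dilCube p.1 p.2 4) E := h2
      _ ≤ del E Y := h1
  · -- upper bound
    have h1 : del E Y ≤ setDist (closedCube p.1 p.2) E + Metric.diam (closedCube p.1 p.2) :=
      infDist_le_setDist_add_diam hIb hEne hY
    have h2 := W.dist_upper p hpW
    have h3 : (2:ℝ)^(-p.2) ≤ 8 * (2:ℝ)^(-k') := by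
      have := hs1; linarith
    have hn1 : (0:ℝ) ≤ (n+1:ℝ) := by positivity
    calc del E Y ≤ setDist (closedCube p.1 p.2) E + Metric.diam (closedCube p.1 p.2) := h1
      _ ≤ 40 * Metric.diam (closedCube p.1 p.2) + Metric.diam (closedCube p.1 p.2) := by
          linarith
      _ = 41 * Metric.diam (closedCube p.1 p.2) := by ring
      _ ≤ 41 * ((n+1:ℝ) * (2:ℝ)^(-p.2)) := by linarith
      _ ≤ 41 * ((n+1:ℝ) * (8 * (2:ℝ)^(-k'))) := by nlinarith
      _ = 328*(n+1)*(2:ℝ)^(-k') := by ring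

lemma grid_diam_real (G : DyadicGrid n E) {k : ℤ} {Q : Set (Amb n)} (hQ : Q ∈ G.Dk k) :
    Bornology.IsBounded Q ∧ Metric.diam Q ≤ G.C₁ * (2:ℝ)^(-k) := by
  have h := (G.diam_bound k Q hQ).2
  have hfin : EMetric.diam Q ≠ ⊤ := ne_top_of_le_ne_top ENNReal.ofReal_ne_top h
  constructor
  · exact Metric.isBounded_iff_ediam_ne_top.2 hfin
  · have := ENNReal.toReal_mono ENNReal.ofReal_ne_top h
    rwa [ENNReal.toReal_ofReal (mul_nonneg G.C₁_pos.le (by positivity))] at this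

/-- Distance bound: if `x ∈ Q''` and `Y` lies in a Whitney cube of `U_{Q''}`. -/
lemma whitney_dist_bound (G : DyadicGrid n E) {W : Whitney n E} {β : ℝ} {k'' : ℤ}
    {Q'' : Set (Amb n)} (hQ'' : Q'' ∈ G.Dk k'') {p : Amb n × ℤ}
    (hp : p ∈ whitneyIdx W β k'' Q'') {x Y : Amb n} (hx : x ∈ Q'')
    (hY : Y ∈ closedCube p.1 p.2) :
    dist x Y ≤ (G.C₁ + β + 8*(n+1)) * (2:ℝ)^(-k'') := by
  obtain ⟨hpW, hs1, hs2, hd⟩ := hp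
  obtain ⟨hQb, hQd⟩ := grid_diam_real G hQ''
  have hIb := isBounded_closedCube p.1 p.2
  have h3 : (2:ℝ)^(-p.2) ≤ 8 * (2:ℝ)^(-k'') := by linarith [hs1]
  have hdI : Metric.diam (closedCube p.1 p.2) ≤ (n+1:ℝ) * (8 * (2:ℝ)^(-k'')) := by
    have h4 := diam_closedCube_le p.1 p.2
    have hn1 : (0:ℝ) ≤ (n+1:ℝ) := by positivity
    nlinarith
  calc dist x Y ≤ Metric.diam Q'' + setDist Q'' (closedCube p.1 p.2)
        + Metric.diam (closedCube p.1 p.2) := dist_le_diam_setDist_diam hQb hIb hx hY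
    _ ≤ G.C₁ * (2:ℝ)^(-k'') + β * (2:ℝ)^(-k'') + (n+1:ℝ) * (8 * (2:ℝ)^(-k'')) :=
        add_le_add (add_le_add hQd hd) hdI
    _ = (G.C₁ + β + 8*(n+1)) * (2:ℝ)^(-k'') := by ring

/-- Uniform upper ADR-type bound for all radii. -/
lemma adr_upper_all_radii {CE : ℝ} (hE : IsADR n E CE) (hEne : E.Nonempty)
    (hd0 : 0 < EMetric.diam E) :
    ∃ Cu : ℝ, 0 < Cu ∧ ∀ x ∈ E, ∀ ρ : ℝ, 0 < ρ →
      sigmaE n E (ball x ρ) ≤ ENNReal.ofReal (Cu * ρ^n) := by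
  obtain ⟨hEc, hCE1, hADR⟩ := hE
  by_cases hfin : EMetric.diam E = ⊤
  · refine ⟨CE, by linarith, fun x hx ρ hρ => ?_⟩
    exact (hADR x hx ρ hρ (by rw [hfin]; exact ENNReal.ofReal_lt_top)).2
  · -- diam E finite
    set r₀ : ℝ := (EMetric.diam E).toReal with hr₀
    have hr₀pos : 0 < r₀ := ENNReal.toReal_pos hd0.ne' hfin
    have hdiam_eq : EMetric.diam E = ENNReal.ofReal r₀ := by
      rw [hr₀, ENNReal.ofReal_toReal hfin]
    -- σ(E) is finite
    have hEfin : sigmaE n E Set.univ ≠ ⊤ := by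
      have hEb : Bornology.IsBounded E := Metric.isBounded_iff_ediam_ne_top.2 hfin
      have htb : TotallyBounded E :=
        (hEb.isCompact_closure.totallyBounded).subset subset_closure
      obtain ⟨t, htE, htfin, hcover⟩ :=
        htb.exists_subset (Metric.dist_mem_uniformity (by linarith : (0:ℝ) < r₀/2))
      have hmeas : MeasurableSet (⋃ y ∈ htfin.toFinset, ball y (r₀/2)) :=
        htfin.toFinset.measurableSet_biUnion (fun y _ => measurableSet_ball)
      have h1 : sigmaE n E Set.univ ≤ sigmaE n E (⋃ y ∈ htfin.toFinset, ball y (r₀/2)) := by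
        unfold sigmaE
        rw [Measure.restrict_apply MeasurableSet.univ, Measure.restrict_apply hmeas]
        apply measure_mono
        intro e he
        refine ⟨?_, he.2⟩
        have h2 := hcover he.2
        simp only [Set.mem_iUnion, Set.mem_setOf_eq] at h2 ⊢
        obtain ⟨y, hy, hmem⟩ := h2
        exact ⟨y, htfin.mem_toFinset.2 hy, by simpa [Metric.mem_ball] using hmem⟩
      have h2 : sigmaE n E (⋃ y ∈ htfin.toFinset, ball y (r₀/2))
          ≤ ∑ y ∈ htfin.toFinset, sigmaE n E (ball y (r₀/2)) :=
        measure_biUnion_finset_le _ _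
      have h3 : (∑ y ∈ htfin.toFinset, sigmaE n E (ball y (r₀/2))) < ⊤ := by
        rw [ENNReal.sum_lt_top]
        intro y hy
        have hyE : y ∈ E := htE (htfin.mem_toFinset.1 hy)
        have h4 := (hADR y hyE (r₀/2) (by linarith) (by
          rw [hdiam_eq]
          exact (ENNReal.ofReal_lt_ofReal_iff hr₀pos).2 (by linarith))).2
        exact lt_of_le_of_lt h4 ENNReal.ofReal_lt_top
      exact ne_top_of_le_ne_top h3.ne (h1.trans h2)
    refine ⟨max CE (((sigmaE n E Set.univ).toReal + 1) / r₀^n), ?_, ?_⟩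
    · have : (0:ℝ) < CE := by linarith
      exact lt_max_of_lt_left this
    · intro x hx ρ hρ
      by_cases hcase : ENNReal.ofReal ρ < EMetric.diam E
      · refine le_trans (hADR x hx ρ hρ hcase).2 ?_
        apply ENNReal.ofReal_le_ofReal
        have : CE ≤ max CE (((sigmaE n E Set.univ).toReal + 1) / r₀^n) := le_max_left _ _
        nlinarith [pow_pos hρ n, pow_nonneg hρ.le n]
      · push_neg at hcase
        have hρr₀ : r₀ ≤ ρ := by
          have := ENNReal.toReal_mono ENNReal.ofReal_ne_top hcase
          rwa [ENNReal.toReal_ofReal hρ.le] at this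
        have h1 : sigmaE n E (ball x ρ) ≤ sigmaE n E Set.univ := measure_mono (Set.subset_univ _)
        have h2 : sigmaE n E Set.univ = ENNReal.ofReal ((sigmaE n E Set.univ).toReal) :=
          (ENNReal.ofReal_toReal hEfin).symm
        refine h1.trans (h2.le.trans (ENNReal.ofReal_le_ofReal ?_))
        have hmax : ((sigmaE n E Set.univ).toReal + 1) / r₀^n
            ≤ max CE (((sigmaE n E Set.univ).toReal + 1) / r₀^n) := le_max_right _ _
        have hr₀n : (0:ℝ) < r₀^n := pow_pos hr₀pos n
        have hρn : r₀^n ≤ ρ^n := pow_le_pow_left₀ hr₀pos.le hρr₀ n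
        have htR : (0:ℝ) ≤ (sigmaE n E Set.univ).toReal := ENNReal.toReal_nonneg
        calc (sigmaE n E Set.univ).toReal ≤ ((sigmaE n E Set.univ).toReal + 1) / r₀^n * r₀^n := by
              rw [div_mul_cancel₀ _ (by positivity : (r₀:ℝ)^n ≠ 0)]; linarith
          _ ≤ max CE (((sigmaE n E Set.univ).toReal + 1) / r₀^n) * ρ^n := by
              apply mul_le_mul hmax hρn (by positivity)
              exact le_trans (by linarith : (0:ℝ) ≤ CE) (le_max_left _ _)

end Aux

theorem cone_sawtooth_equivalence
    {n : ℕ} (hn : 1 ≤ n) {E : Set (Amb n)} {CE : ℝ} (hE : IsADR n E CE)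
    (G : DyadicGrid n E) (W : Whitney n E) {β : ℝ} (hβ : 0 < β)
    (hβne : ∀ k, ∀ Q ∈ G.Dk k, (whitneyIdx W β k Q).Nonempty) :
    ∃ c C : ℝ, 0 < c ∧ 0 < C ∧ ∀ k, ∀ Q ∈ G.Dk k, ∀ F : Amb n → ℝ≥0∞, Measurable F →
      ENNReal.ofReal c *
          ∫⁻ Y in TQ G W β Q, F Y / ENNReal.ofReal (del E Y) ∂volume ≤
        (∫⁻ x in Q, (∫⁻ Y in cone G W β Q x,
            F Y / ENNReal.ofReal (del E Y ^ (n + 1)) ∂volume) ∂(sigmaE n E)) ∧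
      (∫⁻ x in Q, (∫⁻ Y in cone G W β Q x,
          F Y / ENNReal.ofReal (del E Y ^ (n + 1)) ∂volume) ∂(sigmaE n E)) ≤
        ENNReal.ofReal C *
          ∫⁻ Y in TQ G W β Q, F Y / ENNReal.ofReal (del E Y) ∂volume := by
  by_cases hgrid : ∃ k, ∃ Q, Q ∈ G.Dk k
  swap
  · exact ⟨1, 1, one_pos, one_pos, fun k Q hQ F hF => absurd ⟨k, Q, hQ⟩ hgrid⟩
  obtain ⟨k₀, Q₀, hQ₀⟩ := hgrid
  -- basic facts about E
  have hQ₀ne : Q₀.Nonempty := by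
    by_contra h
    rw [Set.not_nonempty_iff_eq_empty] at h
    have h1 := (G.meas_bound k₀ Q₀ hQ₀).1
    rw [h, measure_empty, nonpos_iff_eq_zero, ENNReal.ofReal_eq_zero] at h1
    have : (0:ℝ) < G.C₁⁻¹ * (2:ℝ)^(-(k₀*(n:ℤ))) :=
      mul_pos (inv_pos.2 G.C₁_pos) (by positivity)
    linarith
  have hEne : E.Nonempty := hQ₀ne.mono (G.subset_E k₀ Q₀ hQ₀)
  have hd0 : 0 < EMetric.diam E :=
    lt_trans (ENNReal.ofReal_pos.2 (by positivity)) (G.scale_admissible k₀ ⟨Q₀, hQ₀⟩)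
  obtain ⟨Cu, hCu, hCuball⟩ := adr_upper_all_radii hE hEne hd0
  -- constants
  set K₁ : ℝ := 328*(n+1) with hK₁def
  have hK₁pos : 0 < K₁ := by rw [hK₁def]; positivity
  set M : ℝ := G.C₁ + β + 8*(n+1) with hMdef
  have hMpos : 0 < M := by
    have := G.C₁_pos; rw [hMdef]; positivity
  set c : ℝ := (K₁^n * G.C₁)⁻¹ with hcdef
  have hcpos : 0 < c := by
    rw [hcdef]
    exact inv_pos.2 (mul_pos (pow_pos hK₁pos n) G.C₁_pos)
  have hcinv : c * (K₁^n * G.C₁) = 1 :=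
    inv_mul_cancel₀ (ne_of_gt (mul_pos (pow_pos hK₁pos n) G.C₁_pos))
  set Cbig : ℝ := Cu * (5*M)^n with hCbigdef
  have hCbigpos : 0 < Cbig := by
    rw [hCbigdef]; exact mul_pos hCu (pow_pos (by linarith) n)
  refine ⟨c, Cbig, hcpos, hCbigpos, ?_⟩
  intro k Q hQ F hF
  -- measures and measurability
  have hQmeas : MeasurableSet Q := G.measurableSet k Q hQ
  have hQsubE : Q ⊆ E := G.subset_E k Q hQ
  set μQ := (sigmaE n E).restrict Q with hμQ
  haveI : IsFiniteMeasure μQ := by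
    constructor
    rw [hμQ, Measure.restrict_apply_univ]
    exact lt_of_le_of_lt (G.meas_bound k Q hQ).2 ENNReal.ofReal_lt_top
  set g : Amb n → ℝ≥0∞ := fun Y => F Y / ENNReal.ofReal (del E Y ^ (n+1)) with hgdef
  have hdel_meas : Measurable (del E) := (Metric.continuous_infDist_pt E).measurable
  have hgmeas : Measurable g := by
    apply Measurable.div hF
    exact ENNReal.measurable_ofReal.comp (hdel_meas.pow_const (n+1))
  set A := {z : Amb n × Amb n | z.2 ∈ cone G W β Q z.1} with hAdef
  have hAmeas : MeasurableSet A := measurableSet_coneGraph G W β hQ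
  have hTQmeas : MeasurableSet (TQ G W β Q) := measurableSet_TQ G W β hQ
  have hconem : ∀ x, MeasurableSet (cone G W β Q x) := measurableSet_cone G W β hQ
  have hSmeas : ∀ Y : Amb n, MeasurableSet {x : Amb n | Y ∈ cone G W β Q x} := by
    intro Y
    have hf : Measurable fun x : Amb n => (x, Y) := measurable_id.prodMk measurable_const
    exact hf hAmeas
  -- Tonelli
  have key : (∫⁻ x in Q, (∫⁻ Y in cone G W β Q x, g Y ∂volume) ∂(sigmaE n E))
      = ∫⁻ Y, g Y * μQ {x : Amb n | Y ∈ cone G W β Q x} ∂volume := by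
    have h1 : ∀ x : Amb n, (∫⁻ Y in cone G W β Q x, g Y ∂volume)
        = ∫⁻ Y, A.indicator (fun z : Amb n × Amb n => g z.2) (x, Y) ∂volume := by
      intro x
      rw [← lintegral_indicator (hconem x) g]
      apply lintegral_congr
      intro Y
      by_cases hmem : Y ∈ cone G W β Q x
      · rw [Set.indicator_of_mem hmem, Set.indicator_of_mem (by exact hmem : (x, Y) ∈ A)]
      · rw [Set.indicator_of_notMem hmem, Set.indicator_of_notMem (by exact hmem : (x, Y) ∉ A)]
    calc (∫⁻ x in Q, (∫⁻ Y in cone G W β Q x, g Y ∂volume) ∂(sigmaE n E))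
        = ∫⁻ x, (∫⁻ Y, A.indicator (fun z : Amb n × Amb n => g z.2) (x, Y) ∂volume) ∂μQ := by
          rw [hμQ]; exact lintegral_congr h1
      _ = ∫⁻ Y, (∫⁻ x, A.indicator (fun z : Amb n × Amb n => g z.2) (x, Y) ∂μQ) ∂volume :=
          lintegral_lintegral_swap
            ((Measurable.indicator (hgmeas.comp measurable_snd) hAmeas).aemeasurable)
      _ = ∫⁻ Y, g Y * μQ {x : Amb n | Y ∈ cone G W β Q x} ∂volume := by
          apply lintegral_congr
          intro Y
          have heq : (fun x : Amb n => A.indicator (fun z : Amb n × Amb n => g z.2) (x, Y))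
              = ({x : Amb n | Y ∈ cone G W β Q x}).indicator (fun _ => g Y) := by
            funext x
            by_cases hmem : Y ∈ cone G W β Q x
            · rw [Set.indicator_of_mem (by exact hmem : (x, Y) ∈ A),
                Set.indicator_of_mem (by exact hmem)]
            · rw [Set.indicator_of_notMem (by exact hmem : (x, Y) ∉ A),
                Set.indicator_of_notMem (by exact hmem)]
          rw [heq, lintegral_indicator (hSmeas Y), setLIntegral_const]
  -- restrict to the sawtooth
  have hsupp : ∀ Y : Amb n, Y ∉ TQ G W β Q → μQ {x : Amb n | Y ∈ cone G W β Q x} = 0 := by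
    intro Y hY
    have : {x : Amb n | Y ∈ cone G W β Q x} = ∅ := by
      rw [Set.eq_empty_iff_forall_notMem]
      intro x hx
      exact hY (cone_subset_TQ G W β Q x hx)
    rw [this]
    simp
  have key2 : (∫⁻ Y, g Y * μQ {x : Amb n | Y ∈ cone G W β Q x} ∂volume)
      = ∫⁻ Y in TQ G W β Q, g Y * μQ {x : Amb n | Y ∈ cone G W β Q x} ∂volume := by
    rw [← lintegral_indicator hTQmeas]
    apply lintegral_congr
    intro Y
    by_cases hmem : Y ∈ TQ G W β Q
    · rw [Set.indicator_of_mem hmem]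
    · rw [Set.indicator_of_notMem hmem, hsupp Y hmem, mul_zero]
  -- extracting Whitney data from membership in TQ
  have hTQ_elim : ∀ Y ∈ TQ G W β Q, ∃ k' Q', Q' ∈ G.Dk k' ∧ Q' ⊆ Q ∧ Y ∈ UQ W β k' Q' := by
    intro Y hY
    simp only [TQ, Set.mem_iUnion, Set.mem_sep_iff] at hY
    obtain ⟨k', Q', ⟨h1, h2⟩, h3⟩ := hY
    exact ⟨k', Q', h1, h2, h3⟩
  have hUQ_elim : ∀ (k' : ℤ) (Q' : Set (Amb n)), ∀ Y ∈ UQ W β k' Q',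
      ∃ p ∈ whitneyIdx W β k' Q', Y ∈ closedCube p.1 p.2 := by
    intro k' Q' Y hY
    simp only [UQ, Set.mem_iUnion] at hY
    obtain ⟨p, hp, hc⟩ := hY
    exact ⟨p, hp, hc⟩
  -- positivity of δ on TQ
  have hδpos : ∀ Y ∈ TQ G W β Q, 0 < del E Y := by
    intro Y hY
    obtain ⟨k', Q', hQ', hsub, hYU⟩ := hTQ_elim Y hY
    obtain ⟨p, hp, hYc⟩ := hUQ_elim k' Q' Y hYU
    exact lt_of_lt_of_le (by positivity) (whitney_delta_bounds hEne hp hYc).1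
  -- ENNReal algebra
  have halg : ∀ Y : Amb n, 0 < del E Y →
      g Y * ENNReal.ofReal (del E Y ^ n) = F Y / ENNReal.ofReal (del E Y) := by
    intro Y hδ
    set a := ENNReal.ofReal (del E Y ^ n) with ha
    set b := ENNReal.ofReal (del E Y) with hb
    have ha0 : a ≠ 0 := by
      rw [ha, Ne, ENNReal.ofReal_eq_zero, not_le]
      positivity
    have hatop : a ≠ ⊤ := ENNReal.ofReal_ne_top
    have hab : ENNReal.ofReal (del E Y ^ (n+1)) = a * b := by
      rw [ha, hb, pow_succ, ENNReal.ofReal_mul (by positivity)]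
    show F Y / ENNReal.ofReal (del E Y ^ (n+1)) * a = F Y / b
    rw [hab]
    calc F Y / (a*b) * a = F Y * (a⁻¹ * b⁻¹) * a := by
          rw [div_eq_mul_inv, ENNReal.mul_inv (Or.inl ha0) (Or.inl hatop)]
      _ = F Y * b⁻¹ * (a⁻¹ * a) := by ring
      _ = F Y / b := by rw [ENNReal.inv_mul_cancel ha0 hatop, mul_one, div_eq_mul_inv]
  -- pointwise lower bound
  have hlow : ∀ Y ∈ TQ G W β Q, ENNReal.ofReal c * (F Y / ENNReal.ofReal (del E Y))
      ≤ g Y * μQ {x : Amb n | Y ∈ cone G W β Q x} := by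
    intro Y hY
    obtain ⟨k', Q', hQ', hsub, hYU⟩ := hTQ_elim Y hY
    obtain ⟨p, hp, hYc⟩ := hUQ_elim k' Q' Y hYU
    have hδb := whitney_delta_bounds hEne hp hYc
    have hδp : 0 < del E Y := lt_of_lt_of_le (by positivity) hδb.1
    have hQ'S : Q' ⊆ {x : Amb n | Y ∈ cone G W β Q x} := by
      intro x hx
      simp only [cone, Set.mem_iUnion, Set.mem_sep_iff, Set.mem_setOf_eq]
      exact ⟨k', Q', ⟨hQ', hx, hsub⟩, hYU⟩
    have hμ : sigmaE n E Q' ≤ μQ {x : Amb n | Y ∈ cone G W β Q x} := by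
      rw [hμQ, Measure.restrict_apply (hSmeas Y)]
      exact measure_mono (Set.subset_inter hQ'S hsub)
    have hδn : del E Y ^ n ≤ K₁^n * ((2:ℝ)^(-k'))^n := by
      have h1 : del E Y ≤ K₁ * (2:ℝ)^(-k') := by
        rw [hK₁def]; linarith [hδb.2]
      calc del E Y ^ n ≤ (K₁ * (2:ℝ)^(-k'))^n := pow_le_pow_left₀ hδp.le h1 n
        _ = K₁^n * ((2:ℝ)^(-k'))^n := mul_pow _ _ _
    have hzpow : ((2:ℝ)^(-k'))^n = (2:ℝ)^(-(k' * (n:ℤ))) := by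
      rw [← zpow_natCast ((2:ℝ)^(-k' : ℤ)) n, ← zpow_mul]
      congr 1
      ring
    have hca : ENNReal.ofReal c * ENNReal.ofReal (del E Y ^ n)
        ≤ μQ {x : Amb n | Y ∈ cone G W β Q x} := by
      calc ENNReal.ofReal c * ENNReal.ofReal (del E Y ^ n)
          ≤ ENNReal.ofReal c * ENNReal.ofReal (K₁^n * ((2:ℝ)^(-k'))^n) := by
            exact mul_le_mul_right (ENNReal.ofReal_le_ofReal hδn) _
        _ = ENNReal.ofReal (c * (K₁^n * ((2:ℝ)^(-k'))^n)) := (ENNReal.ofReal_mul hcpos.le).symm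
        _ = ENNReal.ofReal (G.C₁⁻¹ * (2:ℝ)^(-(k' * (n:ℤ)))) := by
            congr 1
            rw [← hzpow]
            have hC₁ : G.C₁ ≠ 0 := ne_of_gt G.C₁_pos
            field_simp [hcdef]
            linear_combination hcinv
        _ ≤ sigmaE n E Q' := (G.meas_bound k' Q' hQ').1
        _ ≤ μQ {x : Amb n | Y ∈ cone G W β Q x} := hμ
    calc ENNReal.ofReal c * (F Y / ENNReal.ofReal (del E Y))
        = ENNReal.ofReal c * (g Y * ENNReal.ofReal (del E Y ^ n)) := by rw [halg Y hδp]
      _ = g Y * (ENNReal.ofReal c * ENNReal.ofReal (del E Y ^ n)) := by ring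
      _ ≤ g Y * μQ {x : Amb n | Y ∈ cone G W β Q x} := mul_le_mul_right hca _
  -- pointwise upper bound
  have hup : ∀ Y ∈ TQ G W β Q, g Y * μQ {x : Amb n | Y ∈ cone G W β Q x}
      ≤ ENNReal.ofReal Cbig * (F Y / ENNReal.ofReal (del E Y)) := by
    intro Y hY
    have hδp : 0 < del E Y := hδpos Y hY
    by_cases hSne : ({x : Amb n | Y ∈ cone G W β Q x} ∩ Q).Nonempty
    · obtain ⟨x₀, hx₀S, hx₀Q⟩ := hSne
      have hdistball : ∀ x' ∈ {x : Amb n | Y ∈ cone G W β Q x},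
          dist x' Y ≤ 2*M*del E Y := by
        intro x' hx'
        simp only [cone, Set.mem_iUnion, Set.mem_sep_iff, Set.mem_setOf_eq] at hx'
        obtain ⟨k₃, Q₃, ⟨hQ₃, hx'Q₃, _⟩, hYU₃⟩ := hx'
        obtain ⟨p₃, hp₃, hYc₃⟩ := hUQ_elim k₃ Q₃ Y hYU₃
        have hδb₃ := whitney_delta_bounds hEne hp₃ hYc₃
        have h2k₃ : (2:ℝ)^(-k₃) ≤ 2 * del E Y := by linarith [hδb₃.1]
        have hd := whitney_dist_bound G hQ₃ hp₃ hx'Q₃ hYc₃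
        calc dist x' Y ≤ M * (2:ℝ)^(-k₃) := by rw [hMdef]; exact hd
          _ ≤ M * (2*del E Y) := by nlinarith
          _ = 2*M*del E Y := by ring
      have hsubball : {x : Amb n | Y ∈ cone G W β Q x} ∩ Q ⊆ ball x₀ (5*M*del E Y) := by
        rintro x' ⟨hx'S, _⟩
        have h1 := hdistball x' hx'S
        have h2 := hdistball x₀ hx₀S
        rw [mem_ball]
        have h3 : dist x' x₀ ≤ dist x' Y + dist x₀ Y := dist_triangle_right x' x₀ Y
        nlinarith
      have hx₀E : x₀ ∈ E := hQsubE hx₀Q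
      have hμS : μQ {x : Amb n | Y ∈ cone G W β Q x}
          ≤ ENNReal.ofReal (Cu * (5*M*del E Y)^n) := by
        rw [hμQ, Measure.restrict_apply (hSmeas Y)]
        exact (measure_mono hsubball).trans (hCuball x₀ hx₀E _ (by positivity))
      have hCeq : ENNReal.ofReal (Cu * (5*M*del E Y)^n)
          = ENNReal.ofReal Cbig * ENNReal.ofReal (del E Y ^ n) := by
        rw [← ENNReal.ofReal_mul hCbigpos.le]
        congr 1
        rw [hCbigdef, mul_pow]
        ring
      calc g Y * μQ {x : Amb n | Y ∈ cone G W β Q x}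
          ≤ g Y * (ENNReal.ofReal Cbig * ENNReal.ofReal (del E Y ^ n)) :=
            mul_le_mul_right (hμS.trans_eq hCeq) _
        _ = ENNReal.ofReal Cbig * (g Y * ENNReal.ofReal (del E Y ^ n)) := by ring
        _ = ENNReal.ofReal Cbig * (F Y / ENNReal.ofReal (del E Y)) := by rw [halg Y hδp]
    · rw [Set.not_nonempty_iff_eq_empty] at hSne
      have : μQ {x : Amb n | Y ∈ cone G W β Q x} = 0 := by
        rw [hμQ, Measure.restrict_apply (hSmeas Y), hSne]
        simp
      rw [this, mul_zero]
      exact zero_le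
  -- conclusion
  constructor
  · calc ENNReal.ofReal c * ∫⁻ Y in TQ G W β Q, F Y / ENNReal.ofReal (del E Y) ∂volume
        = ∫⁻ Y in TQ G W β Q, ENNReal.ofReal c * (F Y / ENNReal.ofReal (del E Y)) ∂volume :=
          (lintegral_const_mul' _ _ ENNReal.ofReal_ne_top).symm
      _ ≤ ∫⁻ Y in TQ G W β Q, g Y * μQ {x : Amb n | Y ∈ cone G W β Q x} ∂volume :=
          setLIntegral_mono' hTQmeas hlow
      _ = ∫⁻ Y, g Y * μQ {x : Amb n | Y ∈ cone G W β Q x} ∂volume := key2.symm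
      _ = ∫⁻ x in Q, (∫⁻ Y in cone G W β Q x, g Y ∂volume) ∂(sigmaE n E) := key.symm
  · calc (∫⁻ x in Q, (∫⁻ Y in cone G W β Q x, g Y ∂volume) ∂(sigmaE n E))
        = ∫⁻ Y, g Y * μQ {x : Amb n | Y ∈ cone G W β Q x} ∂volume := key
      _ = ∫⁻ Y in TQ G W β Q, g Y * μQ {x : Amb n | Y ∈ cone G W β Q x} ∂volume := key2
      _ ≤ ∫⁻ Y in TQ G W β Q, ENNReal.ofReal Cbig * (F Y / ENNReal.ofReal (del E Y)) ∂volume :=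
          setLIntegral_mono' hTQmeas hup
      _ = ENNReal.ofReal Cbig * ∫⁻ Y in TQ G W β Q, F Y / ENNReal.ofReal (del E Y) ∂volume :=
          lintegral_const_mul' _ _ ENNReal.ofReal_ne_top

end LocalTb
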